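/- Discrete energy dissipation of the 1D upwind-SAV scheme: Suppose φⁿ, φⁿ⁺¹ : Fin N → ℝ, μ : Fin N → ℝ, ξ ∈ ℝ satisfy (i) φⁿ⁺¹ᵢ − φⁿᵢ = −(Δt/Δx)(J_{i+1/2} − J_{i−1/2}) with zero boundary fluxes, (ii) J_{i+1/2} = V⁺·M(φⁿ⁺¹ᵢ,φⁿ⁺¹ᵢ₊₁) + V⁻·M(φⁿ⁺¹ᵢ₊₁,φⁿ⁺¹ᵢ) with V_{i+1/2} = −(μᵢ₊₁−μᵢ)/Δx, (iii) μᵢ = −ε²(Δφⁿ⁺¹)ᵢ + ξ·F'(φⁿ⁺¹ᵢ) with the central-difference Laplacian and homogeneous Neumann closure, and (iv) ∑ᵢ(F(φⁿ⁺¹ᵢ) − F(φⁿᵢ)) = ξ·∑ᵢ F'(φⁿ⁺¹ᵢ)(φⁿ⁺¹ᵢ − φⁿᵢ). Then the discrete energy Eⁿ = Δx·∑_{i=1}^{N−1}(ε²/2)((φⁿᵢ₊₁−φⁿᵢ)/Δx)² + Δx·∑_{i=1}^{N} F(φⁿᵢ) satisfies Eⁿ⁺¹ ≤ Eⁿ.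 -/

import Mathlib

open Finset

lemma sbp1 (f g : ℕ → ℝ) : ∀ N, 1 ≤ N →
    ∑ i ∈ Icc 1 N, f i * (g i - g (i-1))
      = f N * g N - f 1 * g 0 + ∑ i ∈ Icc 1 (N-1), (f i - f (i+1)) * g i := by
  intro N hN
  induction N with
  | zero => omega
  | succ n ih =>
    rcases Nat.eq_or_lt_of_le hN with h1 | h1
    · simp only [← h1]; simp; ring
    · have hn : 1 ≤ n := by omega
      rw [Finset.sum_Icc_succ_top (by omega), ih hn]
      have : n + 1 - 1 = (n - 1) + 1 := by omega
      rw [this, Finset.sum_Icc_succ_top (by omega)]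
      have hh : n - 1 + 1 = n := by omega
      rw [hh]
      ring

lemma sbp2 (a d : ℕ → ℝ) : ∀ M, 1 ≤ M →
    ∑ i ∈ Icc 1 M, a i * (d (i+1) - d i)
      = a M * d (M+1) - a 1 * d 1 + ∑ i ∈ Icc 2 M, (a (i-1) - a i) * d i := by
  intro M hM
  induction M with
  | zero => omega
  | succ n ih =>
    rcases Nat.eq_or_lt_of_le hM with h1 | h1
    · simp only [← h1]; simp; ring
    · have hn : 1 ≤ n := by omega
      rw [Finset.sum_Icc_succ_top (by omega), ih hn,
        Finset.sum_Icc_succ_top (show 2 ≤ n + 1 by omega)]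
      simp only [Nat.add_sub_cancel]
      ring

lemma split_left (f : ℕ → ℝ) (m : ℕ) (h : 1 ≤ m) :
    ∑ i ∈ Icc 1 m, f i = f 1 + ∑ i ∈ Icc 2 m, f i := by
  rw [← Finset.add_sum_Ioc_eq_sum_Icc h,
    show Ioc 1 m = Icc 2 m from (Finset.Icc_add_one_left_eq_Ioc 1 m).symm]

noncomputable def upwindMob (k : ℕ) (a b : ℝ) : ℝ :=
  (max (1 + a) 0 * max (1 - b) 0) ^ k

noncomputable def discreteEnergy (N : ℕ) (Δx ε : ℝ) (F : ℝ → ℝ) (ψ : ℕ → ℝ) : ℝ :=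
  Δx * ∑ i ∈ Finset.Icc 1 (N - 1), (ε ^ 2 / 2) * ((ψ (i + 1) - ψ i) / Δx) ^ 2
    + Δx * ∑ i ∈ Finset.Icc 1 N, F (ψ i)

theorem upwind_sav_energy_dissipation
    (N k : ℕ) (hN : 2 ≤ N) (hk : 1 ≤ k)
    (Δt Δx ε : ℝ) (hΔt : 0 < Δt) (hΔx : 0 < Δx) (hε : 0 < ε)
    (F F' : ℝ → ℝ) (hF : ∀ x, HasDerivAt F (F' x) x)
    (φn φn1 μ V J lap : ℕ → ℝ) (ξ : ℝ)
    (hlapI : ∀ i, 2 ≤ i → i ≤ N - 1 →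
      lap i = (φn1 (i + 1) - 2 * φn1 i + φn1 (i - 1)) / Δx ^ 2)
    (hlap1 : lap 1 = (φn1 2 - φn1 1) / Δx ^ 2)
    (hlapN : lap N = (φn1 (N - 1) - φn1 N) / Δx ^ 2)
    (hμ : ∀ i, 1 ≤ i → i ≤ N → μ i = -ε ^ 2 * lap i + ξ * F' (φn1 i))
    (hV : ∀ i, 1 ≤ i → i ≤ N - 1 → V i = -(μ (i + 1) - μ i) / Δx)
    (hJ0 : J 0 = 0) (hJN : J N = 0)
    (hJ : ∀ i, 1 ≤ i → i ≤ N - 1 →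
      J i = max (V i) 0 * upwindMob k (φn1 i) (φn1 (i + 1))
            + min (V i) 0 * upwindMob k (φn1 (i + 1)) (φn1 i))
    (hupd : ∀ i, 1 ≤ i → i ≤ N → φn1 i - φn i = -(Δt / Δx) * (J i - J (i - 1)))
    (hSAV : ∑ i ∈ Finset.Icc 1 N, (F (φn1 i) - F (φn i))
      = ξ * ∑ i ∈ Finset.Icc 1 N, F' (φn1 i) * (φn1 i - φn i)) :
    discreteEnergy N Δx ε F φn1 ≤ discreteEnergy N Δx ε F φn := by
  have hΔx' : Δx ≠ 0 := ne_of_gt hΔx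
  have hΔx2 : (Δx : ℝ) ^ 2 ≠ 0 := pow_ne_zero _ hΔx'
  have hcanc : ∀ X : ℝ, Δx ^ 2 * (X / Δx ^ 2) = X := fun X => by field_simp
  set δ : ℕ → ℝ := fun i => φn1 i - φn i with hδdef
  set a : ℕ → ℝ := fun i => φn1 (i + 1) - φn1 i with hadef
  have hN1 : N - 1 + 1 = N := by omega
  -- summation by parts for the Laplacian
  have claimA : ∑ i ∈ Icc 1 N, (Δx ^ 2 * lap i) * δ i
      = - ∑ i ∈ Icc 1 (N - 1), a i * (δ (i + 1) - δ i) := by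
    rw [sbp2 a δ (N - 1) (by omega), hN1]
    have hsplitTop : ∑ i ∈ Icc 1 N, (Δx ^ 2 * lap i) * δ i
        = (∑ i ∈ Icc 1 (N - 1), (Δx ^ 2 * lap i) * δ i) + (Δx ^ 2 * lap N) * δ N := by
      conv_lhs => rw [show N = (N - 1) + 1 by omega]
      rw [Finset.sum_Icc_succ_top (by omega), hN1]
    rw [hsplitTop, split_left _ (N - 1) (by omega)]
    have hint : ∑ i ∈ Icc 2 (N - 1), (Δx ^ 2 * lap i) * δ i
        = ∑ i ∈ Icc 2 (N - 1), (-(a (i - 1) - a i)) * δ i := by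
      apply Finset.sum_congr rfl
      intro i hi
      simp only [Finset.mem_Icc] at hi
      rw [hlapI i hi.1 hi.2, hcanc]
      have h1 : i - 1 + 1 = i := by omega
      simp only [hadef, h1]
      ring
    rw [hint, hlap1, hlapN, hcanc, hcanc]
    have : ∑ i ∈ Icc 2 (N - 1), (-(a (i - 1) - a i)) * δ i
        = - ∑ i ∈ Icc 2 (N - 1), (a (i - 1) - a i) * δ i := by
      rw [← Finset.sum_neg_distrib]
      exact Finset.sum_congr rfl fun i _ => by ring
    rw [this]
    simp only [hadef, hδdef]
    rw [hN1]
    ring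
  -- gradient part inequality
  have per : ∀ A B : ℝ, Δx * ((ε ^ 2 / 2) * (A / Δx) ^ 2 - (ε ^ 2 / 2) * (B / Δx) ^ 2)
      ≤ (ε ^ 2 / Δx) * (A * (A - B)) := by
    intro A B
    have h : Δx * ((ε ^ 2 / 2) * (A / Δx) ^ 2 - (ε ^ 2 / 2) * (B / Δx) ^ 2)
        = (ε ^ 2 / Δx) * (A * (A - B)) - (ε ^ 2 / Δx) * ((A - B) ^ 2 / 2) := by
      field_simp; ring
    rw [h]
    have : 0 ≤ (ε ^ 2 / Δx) * ((A - B) ^ 2 / 2) := by positivity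
    linarith
  have gradB : Δx * ∑ i ∈ Icc 1 (N - 1), (ε ^ 2 / 2) * ((φn1 (i + 1) - φn1 i) / Δx) ^ 2
      - Δx * ∑ i ∈ Icc 1 (N - 1), (ε ^ 2 / 2) * ((φn (i + 1) - φn i) / Δx) ^ 2
      ≤ (ε ^ 2 / Δx) * ∑ i ∈ Icc 1 (N - 1), a i * (δ (i + 1) - δ i) := by
    rw [Finset.mul_sum, Finset.mul_sum, Finset.mul_sum, ← Finset.sum_sub_distrib]
    apply Finset.sum_le_sum
    intro i _
    have := per (φn1 (i + 1) - φn1 i) (φn (i + 1) - φn i)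
    have hr : a i * (δ (i + 1) - δ i)
        = (φn1 (i + 1) - φn1 i) * ((φn1 (i + 1) - φn1 i) - (φn (i + 1) - φn i)) := by
      simp only [hadef, hδdef]; ring
    rw [hr]
    calc Δx * ((ε ^ 2 / 2) * ((φn1 (i + 1) - φn1 i) / Δx) ^ 2)
          - Δx * ((ε ^ 2 / 2) * ((φn (i + 1) - φn i) / Δx) ^ 2)
        = Δx * ((ε ^ 2 / 2) * ((φn1 (i + 1) - φn1 i) / Δx) ^ 2
            - (ε ^ 2 / 2) * ((φn (i + 1) - φn i) / Δx) ^ 2) := by ring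
      _ ≤ _ := this
  -- flux positivity part
  have hVJ : ∀ i, 1 ≤ i → i ≤ N - 1 → 0 ≤ V i * J i := by
    intro i h1 h2
    rw [hJ i h1 h2]
    have hM1 : 0 ≤ upwindMob k (φn1 i) (φn1 (i + 1)) := by
      unfold upwindMob; positivity
    have hM2 : 0 ≤ upwindMob k (φn1 (i + 1)) (φn1 i) := by
      unfold upwindMob; positivity
    have hmax : 0 ≤ V i * max (V i) 0 := by
      rcases le_total 0 (V i) with h | h
      · rw [max_eq_left h]; exact mul_nonneg h h
      · rw [max_eq_right h]; simp
    have hmin : 0 ≤ V i * min (V i) 0 := by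
      rcases le_total 0 (V i) with h | h
      · rw [min_eq_right h]; simp
      · rw [min_eq_left h]; exact mul_self_nonneg _
    calc (0:ℝ) ≤ (V i * max (V i) 0) * upwindMob k (φn1 i) (φn1 (i + 1))
          + (V i * min (V i) 0) * upwindMob k (φn1 (i + 1)) (φn1 i) := by
          exact add_nonneg (mul_nonneg hmax hM1) (mul_nonneg hmin hM2)
      _ = V i * (max (V i) 0 * upwindMob k (φn1 i) (φn1 (i + 1))
          + min (V i) 0 * upwindMob k (φn1 (i + 1)) (φn1 i)) := by ring
  have claimC : Δx * ∑ i ∈ Icc 1 N, μ i * δ i ≤ 0 := by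
    have step1 : ∑ i ∈ Icc 1 N, μ i * δ i
        = -(Δt / Δx) * ∑ i ∈ Icc 1 N, μ i * (J i - J (i - 1)) := by
      rw [Finset.mul_sum]
      apply Finset.sum_congr rfl
      intro i hi
      simp only [Finset.mem_Icc] at hi
      simp only [hδdef]
      rw [hupd i hi.1 hi.2]
      ring
    have step2 : ∑ i ∈ Icc 1 N, μ i * (J i - J (i - 1))
        = ∑ i ∈ Icc 1 (N - 1), (μ i - μ (i + 1)) * J i := by
      rw [sbp1 μ J N (by omega), hJN, hJ0]
      ring
    have step3 : 0 ≤ ∑ i ∈ Icc 1 (N - 1), (μ i - μ (i + 1)) * J i := by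
      apply Finset.sum_nonneg
      intro i hi
      simp only [Finset.mem_Icc] at hi
      have hv := hV i hi.1 hi.2
      have : μ i - μ (i + 1) = Δx * V i := by
        rw [hv]; field_simp; ring
      rw [this, mul_assoc]
      exact mul_nonneg hΔx.le (hVJ i hi.1 hi.2)
    rw [step1, step2]
    have : Δx * (-(Δt / Δx) * ∑ i ∈ Icc 1 (N - 1), (μ i - μ (i + 1)) * J i)
        = -(Δt * ∑ i ∈ Icc 1 (N - 1), (μ i - μ (i + 1)) * J i) := by
      field_simp
    rw [this]
    exact neg_nonpos_of_nonneg (mul_nonneg hΔt.le step3)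
  -- relate μ-sum to its parts
  have claimD : Δx * ∑ i ∈ Icc 1 N, μ i * δ i
      = -(ε ^ 2 / Δx) * ∑ i ∈ Icc 1 N, (Δx ^ 2 * lap i) * δ i
        + Δx * (ξ * ∑ i ∈ Icc 1 N, F' (φn1 i) * δ i) := by
    have : ∑ i ∈ Icc 1 N, μ i * δ i
        = ∑ i ∈ Icc 1 N, ((-ε ^ 2 * lap i) * δ i + ξ * (F' (φn1 i) * δ i)) := by
      apply Finset.sum_congr rfl
      intro i hi
      simp only [Finset.mem_Icc] at hi
      rw [hμ i hi.1 hi.2]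
      ring
    rw [this, Finset.sum_add_distrib, mul_add]
    congr 1
    · rw [Finset.mul_sum, Finset.mul_sum]
      apply Finset.sum_congr rfl
      intro i _
      field_simp
    · rw [← Finset.mul_sum]
  -- assemble
  have hSAV' : ∑ i ∈ Icc 1 N, (F (φn1 i) - F (φn i)) = ξ * ∑ i ∈ Icc 1 N, F' (φn1 i) * δ i := by
    simpa [hδdef] using hSAV
  unfold discreteEnergy
  have hF1 : Δx * ∑ i ∈ Icc 1 N, F (φn1 i) - Δx * ∑ i ∈ Icc 1 N, F (φn i)
      = Δx * (ξ * ∑ i ∈ Icc 1 N, F' (φn1 i) * δ i) := by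
    rw [← hSAV', Finset.mul_sum, Finset.mul_sum, Finset.mul_sum, ← Finset.sum_sub_distrib]
    exact Finset.sum_congr rfl fun i _ => by ring
  have key : (ε ^ 2 / Δx) * ∑ i ∈ Icc 1 (N - 1), a i * (δ (i + 1) - δ i)
      = -(ε ^ 2 / Δx) * ∑ i ∈ Icc 1 N, (Δx ^ 2 * lap i) * δ i := by
    rw [claimA]; ring
  linarith [gradB, claimC, claimD, hF1, key]
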